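/- Let f(x) = ∫₀^∞ e^{−xt} μ(dt) be completely monotone (μ a nonnegative Borel measure making f finite on (0,∞)), let δ > 0, C > 0, b* > 0, and let W' : (0,b*] → ℝ be a positive function with W'(y) ≥ W'(b*) = C for all y ∈ (0,b*]. Define for t > 0, g(t) = δe^{b*t} + ((1−δW(0))/C)·t − (δ/C)∫₀^{b*} t e^{yt} W'(y) dy, where W(0) ≥ 0 and δW(0) ≤ 1. Then g''(t) ≤ 0 for all t > 0, i.e., g is concave on (0,∞). -/

import Mathlib

open MeasureTheory intervalIntegral Metric Set

-- First helper: derivative of t ↦ ∫ t e^{yt} Wp y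
lemma helper1 (Wp : ℝ → ℝ) (b : ℝ) (hb : 0 < b)
    (hW : ContinuousOn Wp (Set.Icc 0 b)) (t : ℝ) :
    HasDerivAt (fun t => ∫ y in (0:ℝ)..b, t * Real.exp (y * t) * Wp y)
      (∫ y in (0:ℝ)..b, (1 + y * t) * Real.exp (y * t) * Wp y) t := by
  obtain ⟨M, hM⟩ := (isCompact_Icc).exists_bound_of_continuousOn hW
  set R : ℝ := |t| + 1 with hR
  have hIoc : Set.Ioc (0:ℝ) b ⊆ Set.Icc 0 b := Set.Ioc_subset_Icc_self
  have huIoc : Set.uIoc (0:ℝ) b = Set.Ioc 0 b := Set.uIoc_of_le hb.le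
  have huIcc : Set.uIcc (0:ℝ) b = Set.Icc 0 b := Set.uIcc_of_le hb.le
  have hMnn : 0 ≤ M := le_trans (norm_nonneg _) (hM 0 ⟨le_rfl, hb.le⟩)
  have contF : ∀ x : ℝ, ContinuousOn (fun y => x * Real.exp (y * x) * Wp y) (Set.Icc 0 b) := by
    intro x
    exact ((continuous_const.mul (Real.continuous_exp.comp (continuous_id.mul continuous_const))).continuousOn).mul hW
  have contF' : ContinuousOn (fun y => (1 + y * t) * Real.exp (y * t) * Wp y) (Set.Icc 0 b) := by
    exact (((continuous_const.add (continuous_id.mul continuous_const)).mul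
      (Real.continuous_exp.comp (continuous_id.mul continuous_const))).continuousOn).mul hW
  have key := intervalIntegral.hasDerivAt_integral_of_dominated_loc_of_deriv_le
    (F := fun x y => x * Real.exp (y * x) * Wp y)
    (F' := fun x y => (1 + y * x) * Real.exp (y * x) * Wp y)
    (x₀ := t) (a := 0) (b := b) (μ := volume)
    (bound := fun _ => (1 + b * R) * Real.exp (b * R) * M)
    (ball_mem_nhds t (by norm_num : (0:ℝ) < 1))
    (Filter.Eventually.of_forall fun x =>
      ((contF x).mono (by rw [huIoc]; exact hIoc)).aestronglyMeasurable measurableSet_uIoc)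
    (by rw [intervalIntegrable_iff_integrableOn_Icc_of_le hb.le]
        exact (contF t).integrableOn_compact isCompact_Icc)
    ((contF'.mono (by rw [huIoc]; exact hIoc)).aestronglyMeasurable measurableSet_uIoc)
    ?_ (intervalIntegrable_const) ?_
  · exact key.2
  · refine Filter.Eventually.of_forall fun y hy x hx => ?_
    rw [huIoc] at hy
    have hy' := hIoc hy
    have hxR : |x| ≤ R := by
      have := mem_ball_iff_norm.mp hx
      rw [Real.norm_eq_abs] at this
      have : |x| - |t| ≤ 1 := le_trans (abs_sub_abs_le_abs_sub x t) this.le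
      linarith
    have hyx : y * x ≤ b * R := by
      calc y * x ≤ |y * x| := le_abs_self _
        _ = |y| * |x| := abs_mul _ _
        _ ≤ b * R := by
            apply mul_le_mul _ hxR (abs_nonneg _) hb.le
            rw [abs_of_nonneg hy'.1]; exact hy'.2
    have h1 : |1 + y * x| ≤ 1 + b * R := by
      have : |y * x| ≤ b * R := by
        rw [abs_mul]
        apply mul_le_mul _ hxR (abs_nonneg _) hb.le
        rw [abs_of_nonneg hy'.1]; exact hy'.2
      calc |1 + y * x| ≤ |(1:ℝ)| + |y * x| := abs_add_le _ _
        _ ≤ 1 + b * R := by rw [abs_one]; linarith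
    rw [Real.norm_eq_abs, abs_mul, abs_mul]
    apply mul_le_mul _ (hM y hy') (norm_nonneg _) (by positivity)
    apply mul_le_mul h1 _ (abs_nonneg _) (by positivity)
    rw [abs_of_nonneg (Real.exp_nonneg _)]
    exact Real.exp_le_exp.mpr hyx
  · refine Filter.Eventually.of_forall fun y hy x hx => ?_
    have h1 : HasDerivAt (fun x => y * x) y x := by
      simpa using (hasDerivAt_id x).const_mul y
    have h2 : HasDerivAt (fun x => Real.exp (y * x)) (Real.exp (y * x) * y) x := h1.exp
    have h3 := ((hasDerivAt_id x).mul h2).mul_const (Wp y)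
    exact h3.congr_deriv (by simp only [id]; ring)

lemma helper2 (Wp : ℝ → ℝ) (b : ℝ) (hb : 0 < b)
    (hW : ContinuousOn Wp (Set.Icc 0 b)) (t : ℝ) :
    HasDerivAt (fun t => ∫ y in (0:ℝ)..b, (1 + y * t) * Real.exp (y * t) * Wp y)
      (∫ y in (0:ℝ)..b, (2 * y + y ^ 2 * t) * Real.exp (y * t) * Wp y) t := by
  obtain ⟨M, hM⟩ := (isCompact_Icc).exists_bound_of_continuousOn hW
  set R : ℝ := |t| + 1 with hR
  have hIoc : Set.Ioc (0:ℝ) b ⊆ Set.Icc 0 b := Set.Ioc_subset_Icc_self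
  have huIoc : Set.uIoc (0:ℝ) b = Set.Ioc 0 b := Set.uIoc_of_le hb.le
  have hMnn : 0 ≤ M := le_trans (norm_nonneg _) (hM 0 ⟨le_rfl, hb.le⟩)
  have contF : ∀ x : ℝ, ContinuousOn (fun y => (1 + y * x) * Real.exp (y * x) * Wp y) (Set.Icc 0 b) := by
    intro x
    exact (((continuous_const.add (continuous_id.mul continuous_const)).mul
      (Real.continuous_exp.comp (continuous_id.mul continuous_const))).continuousOn).mul hW
  have contF' : ContinuousOn (fun y => (2 * y + y ^ 2 * t) * Real.exp (y * t) * Wp y) (Set.Icc 0 b) := by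
    exact ((((continuous_const.mul continuous_id).add ((continuous_pow 2).mul continuous_const)).mul
      (Real.continuous_exp.comp (continuous_id.mul continuous_const))).continuousOn).mul hW
  have key := intervalIntegral.hasDerivAt_integral_of_dominated_loc_of_deriv_le
    (F := fun x y => (1 + y * x) * Real.exp (y * x) * Wp y)
    (F' := fun x y => (2 * y + y ^ 2 * x) * Real.exp (y * x) * Wp y)
    (x₀ := t) (a := 0) (b := b) (μ := volume)
    (bound := fun _ => (2 * b + b ^ 2 * R) * Real.exp (b * R) * M)
    (ball_mem_nhds t (by norm_num : (0:ℝ) < 1))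
    (Filter.Eventually.of_forall fun x =>
      ((contF x).mono (by rw [huIoc]; exact hIoc)).aestronglyMeasurable measurableSet_uIoc)
    (by rw [intervalIntegrable_iff_integrableOn_Icc_of_le hb.le]
        exact (contF t).integrableOn_compact isCompact_Icc)
    ((contF'.mono (by rw [huIoc]; exact hIoc)).aestronglyMeasurable measurableSet_uIoc)
    ?_ (intervalIntegrable_const) ?_
  · exact key.2
  · refine Filter.Eventually.of_forall fun y hy x hx => ?_
    rw [huIoc] at hy
    have hy' := hIoc hy
    have hxR : |x| ≤ R := by
      have h := mem_ball_iff_norm.mp hx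
      rw [Real.norm_eq_abs] at h
      have : |x| - |t| ≤ 1 := le_trans (abs_sub_abs_le_abs_sub x t) h.le
      linarith
    have hyb : |y| ≤ b := by rw [abs_of_nonneg hy'.1]; exact hy'.2
    have hyx : y * x ≤ b * R := by
      calc y * x ≤ |y * x| := le_abs_self _
        _ = |y| * |x| := abs_mul _ _
        _ ≤ b * R := mul_le_mul hyb hxR (abs_nonneg _) hb.le
    have h1 : |2 * y + y ^ 2 * x| ≤ 2 * b + b ^ 2 * R := by
      have h2 : |y ^ 2 * x| ≤ b ^ 2 * R := by
        rw [abs_mul, abs_pow]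
        apply mul_le_mul _ hxR (abs_nonneg _) (by positivity)
        exact pow_le_pow_left₀ (abs_nonneg _) hyb 2
      calc |2 * y + y ^ 2 * x| ≤ |2 * y| + |y ^ 2 * x| := abs_add_le _ _
        _ ≤ 2 * b + b ^ 2 * R := by
            rw [abs_mul]
            have : |(2:ℝ)| * |y| ≤ 2 * b := by
              rw [abs_two]; linarith
            linarith
    rw [Real.norm_eq_abs, abs_mul, abs_mul]
    apply mul_le_mul _ (hM y hy') (norm_nonneg _) (by positivity)
    apply mul_le_mul h1 _ (abs_nonneg _) (by positivity)
    rw [abs_of_nonneg (Real.exp_nonneg _)]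
    exact Real.exp_le_exp.mpr hyx
  · refine Filter.Eventually.of_forall fun y hy x hx => ?_
    have h1 : HasDerivAt (fun x => y * x) y x := by
      simpa using (hasDerivAt_id x).const_mul y
    have h2 : HasDerivAt (fun x => Real.exp (y * x)) (Real.exp (y * x) * y) x := h1.exp
    have h0 : HasDerivAt (fun x => 1 + y * x) y x := h1.const_add 1
    have h3 := (h0.mul h2).mul_const (Wp y)
    exact h3.congr_deriv (by ring)

/-- Let `δ > 0`, `C > 0`, `b* > 0`, `W' ≥ C` on `(0,b*]` with `W'(b*) = C`, `W0 ≥ 0`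
with `δ W0 ≤ 1`, and `g t = δ e^{b* t} + ((1 − δ W0)/C) t − (δ/C)∫₀^{b*} t e^{y t} W'(y) dy`.
Then `g'' ≤ 0` on `(0,∞)`, i.e. `g` is concave there. -/
theorem g_concave (Wp : ℝ → ℝ) (δ C bstar W0 : ℝ)
    (hδ : 0 < δ) (hC : 0 < C) (hbstar : 0 < bstar)
    (hWpcont : ContinuousOn Wp (Set.Icc 0 bstar))
    (hWpC : ∀ y ∈ Set.Ioc (0:ℝ) bstar, C ≤ Wp y)
    (hWpb : Wp bstar = C)
    (hW0 : 0 ≤ W0) (hδW0 : δ * W0 ≤ 1) :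
    (∀ t ∈ Set.Ioi (0:ℝ),
        deriv (deriv (fun t => δ * Real.exp (bstar * t) + (1 - δ * W0) / C * t -
          δ / C * ∫ y in (0:ℝ)..bstar, t * Real.exp (y * t) * Wp y)) t ≤ 0) ∧
    ConcaveOn ℝ (Set.Ioi 0)
      (fun t => δ * Real.exp (bstar * t) + (1 - δ * W0) / C * t -
        δ / C * ∫ y in (0:ℝ)..bstar, t * Real.exp (y * t) * Wp y) := by
  set f : ℝ → ℝ := fun t => δ * Real.exp (bstar * t) + (1 - δ * W0) / C * t -
      δ / C * ∫ y in (0:ℝ)..bstar, t * Real.exp (y * t) * Wp y with hf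
  have h_exp : ∀ t : ℝ, HasDerivAt (fun t => Real.exp (bstar * t))
      (Real.exp (bstar * t) * bstar) t := fun t =>
    HasDerivAt.exp (by simpa using (hasDerivAt_id t).const_mul bstar)
  have hg' : ∀ t : ℝ, HasDerivAt f
      (δ * (Real.exp (bstar * t) * bstar) + (1 - δ * W0) / C -
        δ / C * ∫ y in (0:ℝ)..bstar, (1 + y * t) * Real.exp (y * t) * Wp y) t := by
    intro t
    have hlin : HasDerivAt (fun t : ℝ => (1 - δ * W0) / C * t) ((1 - δ * W0) / C) t := by
      simpa using (hasDerivAt_id t).const_mul ((1 - δ * W0) / C)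
    exact (((h_exp t).const_mul δ).add hlin).sub
      ((helper1 Wp bstar hbstar hWpcont t).const_mul (δ / C))
  have hderiv_f : deriv f = fun t =>
      δ * (Real.exp (bstar * t) * bstar) + (1 - δ * W0) / C -
        δ / C * ∫ y in (0:ℝ)..bstar, (1 + y * t) * Real.exp (y * t) * Wp y :=
    funext fun t => (hg' t).deriv
  have hg'' : ∀ t : ℝ, HasDerivAt (deriv f)
      (δ * (Real.exp (bstar * t) * bstar * bstar) -
        δ / C * ∫ y in (0:ℝ)..bstar, (2 * y + y ^ 2 * t) * Real.exp (y * t) * Wp y) t := by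
    intro t
    rw [hderiv_f]
    have h := ((((h_exp t).mul_const bstar).const_mul δ).add
          (hasDerivAt_const t ((1 - δ * W0) / C))).sub
      ((helper2 Wp bstar hbstar hWpcont t).const_mul (δ / C))
    simp at h
    exact h
  have hmain : ∀ t ∈ Set.Ioi (0:ℝ), deriv (deriv f) t ≤ 0 := by
    intro t ht
    rw [Set.mem_Ioi] at ht
    rw [(hg'' t).deriv]
    -- lower bound the integral
    have hcont2 : ContinuousOn (fun y => (2 * y + y ^ 2 * t) * Real.exp (y * t) * Wp y)
        (Set.Icc 0 bstar) :=
      ((((continuous_const.mul continuous_id).add ((continuous_pow 2).mul continuous_const)).mul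
        (Real.continuous_exp.comp (continuous_id.mul continuous_const))).continuousOn).mul hWpcont
    have hcont1 : Continuous (fun y : ℝ => (2 * y + y ^ 2 * t) * Real.exp (y * t) * C) :=
      (((continuous_const.mul continuous_id).add ((continuous_pow 2).mul continuous_const)).mul
        (Real.continuous_exp.comp (continuous_id.mul continuous_const))).mul continuous_const
    have hint2 : IntervalIntegrable (fun y => (2 * y + y ^ 2 * t) * Real.exp (y * t) * Wp y)
        volume 0 bstar := by
      rw [intervalIntegrable_iff_integrableOn_Icc_of_le hbstar.le]
      exact hcont2.integrableOn_compact isCompact_Icc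
    have hmono : (∫ y in (0:ℝ)..bstar, (2 * y + y ^ 2 * t) * Real.exp (y * t) * C) ≤
        ∫ y in (0:ℝ)..bstar, (2 * y + y ^ 2 * t) * Real.exp (y * t) * Wp y := by
      apply intervalIntegral.integral_mono_on hbstar.le (hcont1.intervalIntegrable _ _) hint2
      intro y hy
      have hfac : 0 ≤ (2 * y + y ^ 2 * t) * Real.exp (y * t) := by
        have : 0 ≤ 2 * y + y ^ 2 * t := by nlinarith [hy.1, ht.le]
        positivity
      rcases eq_or_lt_of_le hy.1 with h0 | h0
      · rw [← h0]; ring_nf; exact le_rfl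
      · exact mul_le_mul_of_nonneg_left (hWpC y ⟨h0, hy.2⟩) hfac
    have hFTC : (∫ y in (0:ℝ)..bstar, (2 * y + y ^ 2 * t) * Real.exp (y * t)) =
        bstar ^ 2 * Real.exp (bstar * t) := by
      have hH : ∀ y ∈ Set.uIcc (0:ℝ) bstar, HasDerivAt (fun y => y ^ 2 * Real.exp (y * t))
          ((2 * y + y ^ 2 * t) * Real.exp (y * t)) y := by
        intro y _
        have hp : HasDerivAt (fun y : ℝ => y ^ 2) (2 * y) y := by
          simpa using hasDerivAt_pow 2 y
        have he : HasDerivAt (fun y : ℝ => Real.exp (y * t)) (Real.exp (y * t) * t) y :=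
          HasDerivAt.exp (by simpa using (hasDerivAt_id y).mul_const t)
        have := hp.mul he
        exact this.congr_deriv (by ring)
      have hint : IntervalIntegrable (fun y => (2 * y + y ^ 2 * t) * Real.exp (y * t))
          volume 0 bstar :=
        ((((continuous_const.mul continuous_id).add ((continuous_pow 2).mul continuous_const)).mul
          (Real.continuous_exp.comp (continuous_id.mul continuous_const)))).intervalIntegrable _ _
      rw [intervalIntegral.integral_eq_sub_of_hasDerivAt hH hint]
      norm_num
    have hIconst : (∫ y in (0:ℝ)..bstar, (2 * y + y ^ 2 * t) * Real.exp (y * t) * C) =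
        bstar ^ 2 * Real.exp (bstar * t) * C := by
      rw [intervalIntegral.integral_mul_const, hFTC]
    have hI : C * (bstar ^ 2 * Real.exp (bstar * t)) ≤
        ∫ y in (0:ℝ)..bstar, (2 * y + y ^ 2 * t) * Real.exp (y * t) * Wp y := by
      rw [mul_comm]; rw [hIconst] at hmono; exact hmono
    have h2 : δ / C * (C * (bstar ^ 2 * Real.exp (bstar * t))) ≤
        δ / C * ∫ y in (0:ℝ)..bstar, (2 * y + y ^ 2 * t) * Real.exp (y * t) * Wp y :=
      mul_le_mul_of_nonneg_left hI (by positivity)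
    have h4 : δ / C * (C * (bstar ^ 2 * Real.exp (bstar * t))) =
        δ * (Real.exp (bstar * t) * bstar * bstar) := by
      field_simp
    linarith
  refine ⟨hmain, ?_⟩
  apply concaveOn_of_deriv2_nonpos (convex_Ioi 0)
  · have hdiff : Differentiable ℝ f := fun t => (hg' t).differentiableAt
    exact hdiff.continuous.continuousOn
  · exact fun x _ => (hg' x).differentiableAt.differentiableWithinAt
  · exact fun x _ => (hg'' x).differentiableAt.differentiableWithinAt
  · intro x hx
    rw [interior_Ioi] at hx
    simpa [Function.iterate_succ, Function.comp] using hmain x hx
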